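/- Let G = (V,E) be an almost tree (2): a connected graph in which every biconnected component has at most 2 edges outside a spanning tree of that component. Then for any S ⊆ V with |δ(S)| ≥ 4, the graph (V, E \ δ(S)) has at least three connected components. -/

import Mathlib

/-- The cut-set of `S`: edges of `G` with exactly one endpoint in `S`. -/
def cutSet {V : Type*} (G : SimpleGraph V) (S : Set V) : Set (Sym2 V) :=
  {e | e ∈ G.edgeSet ∧ ∃ u v, e = s(u, v) ∧ u ∈ S ∧ v ∉ S}

/-- A subgraph is biconnected if it is connected and has no cut vertex. -/
def IsBiconnected {V : Type*} (G : SimpleGraph V) (H : G.Subgraph) : Prop :=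
  H.Connected ∧ ∀ v ∈ H.verts, ((H.deleteVerts {v}).coe).Connected

/-- An almost tree (2): a connected graph each of whose maximal biconnected components
has cycle rank at most 2, i.e. at most `|vertices| + 1` edges. -/
def IsAlmostTree2 {V : Type*} [Fintype V] (G : SimpleGraph V) : Prop :=
  G.Connected ∧ ∀ H : G.Subgraph, Maximal (IsBiconnected G) H →
    H.edgeSet.ncard ≤ H.verts.ncard + 1


section AT2Aux
open SimpleGraph

variable {V : Type*} {G : SimpleGraph V}


lemma myLeDelete {K L : G.Subgraph} {s : Set V}
    (h : K ≤ L) (hd : ∀ v ∈ K.verts, v ∉ s) : K ≤ L.deleteVerts s := by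
  constructor
  · intro v hv
    exact ⟨h.1 hv, hd v hv⟩
  · intro a b hab
    rw [Subgraph.deleteVerts_adj]
    exact ⟨h.1 (K.edge_vert hab), hd _ (K.edge_vert hab), h.1 (K.edge_vert hab.symm),
      hd _ (K.edge_vert hab.symm), h.2 hab⟩

lemma myDeleteSup (H K : G.Subgraph) (s : Set V) :
    (H ⊔ K).deleteVerts s = H.deleteVerts s ⊔ K.deleteVerts s := by
  ext v w
  · simp [Subgraph.deleteVerts_verts, Set.union_diff_distrib]
  · simp only [Subgraph.deleteVerts_adj, Subgraph.sup_adj, Subgraph.verts_sup, Set.mem_union]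
    constructor
    · rintro ⟨_, hv, _, hw, (h | h)⟩
      · exact Or.inl ⟨H.edge_vert h, hv, H.edge_vert h.symm, hw, h⟩
      · exact Or.inr ⟨K.edge_vert h, hv, K.edge_vert h.symm, hw, h⟩
    · rintro (⟨h1, hv, h2, hw, h⟩ | ⟨h1, hv, h2, hw, h⟩)
      · exact ⟨Or.inl h1, hv, Or.inl h2, hw, Or.inl h⟩
      · exact ⟨Or.inr h1, hv, Or.inr h2, hw, Or.inr h⟩

lemma myDeleteSelf {H : G.Subgraph} {s : Set V} (h : ∀ v ∈ H.verts, v ∉ s) :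
    H.deleteVerts s = H := by
  ext v w
  · simp only [Subgraph.deleteVerts_verts, Set.mem_diff]
    exact ⟨fun h => h.1, fun hv => ⟨hv, h v hv⟩⟩
  · rw [Subgraph.deleteVerts_adj]
    exact ⟨fun h => h.2.2.2.2, fun hab =>
      ⟨H.edge_vert hab, h _ (H.edge_vert hab), H.edge_vert hab.symm, h _ (H.edge_vert hab.symm), hab⟩⟩

-- Helper2
lemma mySupConnected {K₁ K₂ : G.Subgraph} (h₁ : K₁.Connected)
    (hcov : ∀ v (hv : v ∈ K₂.verts), ∃ z, ∃ hz : z ∈ K₁.verts,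
      (K₁ ⊔ K₂).coe.Reachable ⟨v, Or.inr hv⟩ ⟨z, Or.inl hz⟩) :
    (K₁ ⊔ K₂).Connected := by
  rw [Subgraph.connected_iff']
  obtain ⟨z₀, hz₀⟩ := h₁.nonempty
  rw [connected_iff_exists_forall_reachable]
  refine ⟨⟨z₀, Or.inl hz₀⟩, ?_⟩
  rintro ⟨v, (hv | hv)⟩
  · exact (Reachable.map (Subgraph.inclusion le_sup_left) (h₁ ⟨z₀, hz₀⟩ ⟨v, hv⟩) : _)
  · obtain ⟨z, hz, hr⟩ := hcov v hv
    exact (Reachable.map (Subgraph.inclusion le_sup_left) (h₁ ⟨z₀, hz₀⟩ ⟨z, hz⟩)).trans hr.symm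

lemma myPW {x y : V} (q : G.Walk x y) : ∀ (_hq : q.IsPath) (w v : V)
    (hv : v ∈ (q.toSubgraph.deleteVerts {w}).verts),
    ∃ z, ∃ hz : z ∈ (q.toSubgraph.deleteVerts {w}).verts, (z = x ∨ z = y) ∧
      (q.toSubgraph.deleteVerts {w}).coe.Reachable ⟨v, hv⟩ ⟨z, hz⟩ := by
  induction q with
  | nil =>
    intro _hq w v hv
    have hv' := hv
    rw [Subgraph.deleteVerts_verts] at hv'
    have hv1 := (Walk.mem_verts_toSubgraph _).1 hv'.1
    simp only [Walk.support_nil, List.mem_singleton] at hv1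
    subst hv1
    exact ⟨v, hv, Or.inl rfl, Reachable.refl _⟩
  | @cons a c b h p ih =>
    intro hq w v hv
    rw [Walk.cons_isPath_iff] at hq
    obtain ⟨hp, hanot⟩ := hq
    have hv' := hv
    rw [Subgraph.deleteVerts_verts] at hv'
    have hvs : v ∈ (Walk.cons h p).support := (Walk.mem_verts_toSubgraph _).1 hv'.1
    have hvw : v ≠ w := by simpa using hv'.2
    rw [Walk.support_cons, List.mem_cons] at hvs
    rcases hvs with rfl | hvp
    · exact ⟨v, hv, Or.inl rfl, Reachable.refl _⟩
    · by_cases hwa : w = a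
      · subst hwa
        have hdisj : ∀ u ∈ p.toSubgraph.verts, u ∉ ({w} : Set V) := by
          intro u hu hmem
          rw [Set.mem_singleton_iff] at hmem; subst hmem
          exact hanot ((Walk.mem_verts_toSubgraph p).1 hu)
        have hle2 : p.toSubgraph ≤ (Walk.cons h p).toSubgraph.deleteVerts {w} :=
          myLeDelete le_sup_right hdisj
        have hb : b ∈ p.toSubgraph.verts := p.end_mem_verts_toSubgraph
        have hvP : v ∈ p.toSubgraph.verts := (Walk.mem_verts_toSubgraph p).2 hvp
        exact ⟨b, hle2.1 hb, Or.inr rfl,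
          (p.toSubgraph_connected ⟨v, hvP⟩ ⟨b, hb⟩).map (Subgraph.inclusion hle2)⟩
      · by_cases hwc : w = c
        · subst hwc
          cases p with
          | nil =>
            simp only [Walk.support_nil, List.mem_singleton] at hvp
            exact absurd hvp hvw
          | @cons c d b h2 p2 =>
            rw [Walk.cons_isPath_iff] at hp
            obtain ⟨hp2, hcnot⟩ := hp
            rw [Walk.support_cons, List.mem_cons] at hvp
            rcases hvp with rfl | hvp2
            · exact absurd rfl hvw
            · have hdisj : ∀ u ∈ p2.toSubgraph.verts, u ∉ ({w} : Set V) := by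
                intro u hu hmem
                rw [Set.mem_singleton_iff] at hmem; subst hmem
                exact hcnot ((Walk.mem_verts_toSubgraph p2).1 hu)
              have hle2 : p2.toSubgraph ≤
                  (Walk.cons h (Walk.cons h2 p2)).toSubgraph.deleteVerts {w} :=
                myLeDelete (le_trans le_sup_right le_sup_right) hdisj
              have hb : b ∈ p2.toSubgraph.verts := p2.end_mem_verts_toSubgraph
              have hvP : v ∈ p2.toSubgraph.verts := (Walk.mem_verts_toSubgraph p2).2 hvp2
              exact ⟨b, hle2.1 hb, Or.inr rfl,
                (p2.toSubgraph_connected ⟨v, hvP⟩ ⟨b, hb⟩).map (Subgraph.inclusion hle2)⟩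
        · have hvP : v ∈ (p.toSubgraph.deleteVerts {w}).verts := by
            rw [Subgraph.deleteVerts_verts]
            exact ⟨(Walk.mem_verts_toSubgraph p).2 hvp, by simpa using hvw⟩
          obtain ⟨z, hz, hzor, hreach⟩ := ih hp w v hvP
          have hmono : p.toSubgraph.deleteVerts {w} ≤
              (Walk.cons h p).toSubgraph.deleteVerts {w} :=
            Subgraph.deleteVerts_mono le_sup_right
          rcases hzor with rfl | rfl
          · -- z = c, extend to a
            have haQ : a ∈ (Walk.cons h p).toSubgraph.verts := by
              rw [Walk.mem_verts_toSubgraph]; simp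
            have haD : a ∈ ((Walk.cons h p).toSubgraph.deleteVerts {w}).verts := by
              rw [Subgraph.deleteVerts_verts]
              exact ⟨haQ, by simp [Ne.symm hwa]⟩
            have hadj : ((Walk.cons h p).toSubgraph.deleteVerts {w}).Adj z a := by
              rw [Subgraph.deleteVerts_adj]
              refine ⟨hmono.1 hz |>.1 |> (fun hh => hh), ?_, haQ, by simp [Ne.symm hwa], ?_⟩
              · have := (Subgraph.deleteVerts_verts ▸ hmono.1 hz).2
                simpa using this
              · exact Or.inl (by simp)
            refine ⟨a, haD, Or.inl rfl, ?_⟩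
            have hzmem := hmono.1 hz
            exact (hreach.map (Subgraph.inclusion hmono)).trans (Adj.reachable (by
              rw [Subgraph.coe_adj]; exact hadj))
          · exact ⟨z, hmono.1 hz, Or.inr rfl, hreach.map (Subgraph.inclusion hmono)⟩

lemma myBL {H : G.Subgraph} (hH : IsBiconnected G H) {x y : V} (hx : x ∈ H.verts)
    (hy : y ∈ H.verts) (q : G.Walk x y) (hq : q.IsPath) :
    IsBiconnected G (H ⊔ q.toSubgraph) := by
  constructor
  · exact Subgraph.connected_sup hH.1.preconnected q.toSubgraph_connected.preconnected ⟨x, hx, q.start_mem_verts_toSubgraph⟩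
  · intro w hw
    rw [myDeleteSup]
    have hK₁ : (H.deleteVerts {w}).Connected := by
      by_cases hwH : w ∈ H.verts
      · rw [Subgraph.connected_iff']
        exact hH.2 w hwH
      · rw [myDeleteSelf (fun v hv hmem => by
          rw [Set.mem_singleton_iff] at hmem; exact hwH (hmem ▸ hv))]
        exact hH.1
    rw [← Subgraph.connected_iff']
    apply mySupConnected hK₁
    intro v hv
    obtain ⟨z, hz, hzor, hreach⟩ := myPW q hq w v hv
    have hzw : z ∉ ({w} : Set V) := (Subgraph.deleteVerts_verts ▸ hz).2
    have hzH : z ∈ H.verts := by rcases hzor with rfl | rfl <;> [exact hx; exact hy]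
    refine ⟨z, ⟨hzH, hzw⟩, ?_⟩
    exact (hreach.map (Subgraph.inclusion le_sup_right) : _)

lemma myShort {x y : V} (q : G.Walk x y) (hq : q.IsPath) (hxy : x ≠ y)
    (hsub : ∀ z ∈ q.support, z = x ∨ z = y) : s(x, y) ∈ q.edges := by
  cases q with
  | nil => exact absurd rfl hxy
  | @cons x c y h q' =>
    rw [Walk.cons_isPath_iff] at hq
    have hc : c = y := by
      rcases hsub c (by simp) with rfl | rfl
      · exact absurd q'.start_mem_support hq.2
      · rfl
    subst hc
    have hnil : q' = Walk.nil := (Walk.isPath_iff_eq_nil (p := q')).1 hq.1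
    subst hnil
    simp

lemma myEar [DecidableEq V] {H : G.Subgraph} (hmax : Maximal (IsBiconnected G) H) {x y : V}
    (hx : x ∈ H.verts) (hy : y ∈ H.verts) (hxy : x ≠ y) (p : G.Walk x y)
    (hsup : ∀ z ∈ p.support, z = x ∨ z = y ∨ z ∉ H.verts) :
    s(x, y) ∈ p.edges := by
  have hqp : p.bypass.IsPath := p.bypass_isPath
  by_cases hout : ∃ z ∈ p.bypass.support, z ∉ H.verts
  · obtain ⟨z, hzs, hzH⟩ := hout
    have hbig := myBL hmax.1 hx hy p.bypass hqp
    have hle := hmax.2 hbig le_sup_left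
    exact absurd (hle.1 (Or.inr ((Walk.mem_verts_toSubgraph p.bypass).2 hzs))) hzH
  · push_neg at hout
    have hsub : ∀ z ∈ p.bypass.support, z = x ∨ z = y := by
      intro z hz
      rcases hsup z (p.support_bypass_subset hz) with h | h | h
      exacts [Or.inl h, Or.inr h, absurd h (not_not.2 (hout z hz))]
    exact p.edges_bypass_subset (myShort p.bypass hqp hxy hsub)

lemma myInduced {H : G.Subgraph} (hmax : Maximal (IsBiconnected G) H) {a b : V}
    (ha : a ∈ H.verts) (hb : b ∈ H.verts) (hab : G.Adj a b) : H.Adj a b := by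
  have hq : (Walk.cons hab Walk.nil).IsPath := by
    simp [Walk.cons_isPath_iff, hab.ne]
  have hbig := myBL hmax.1 ha hb (Walk.cons hab Walk.nil) hq
  have hle := hmax.2 hbig le_sup_left
  apply hle.2
  right
  simp [Walk.toSubgraph]

lemma myFV {H : G.Subgraph} {c b : V} (p : G.Walk c b) (hb : b ∈ H.verts) :
    ∃ y, ∃ _hy : y ∈ H.verts, ∃ pre : G.Walk c y, ∃ suf : G.Walk y b,
      pre.edges ⊆ p.edges ∧ suf.edges ⊆ p.edges ∧ suf.length ≤ p.length ∧
      pre.support ⊆ p.support ∧ (∀ z ∈ pre.support, z ∈ H.verts → z = y) := by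
  induction p with
  | nil =>
    refine ⟨_, hb, .nil, .nil, by simp, by simp, by simp, by simp, ?_⟩
    intro z hz _
    simpa using hz
  | @cons c d b h p' ih =>
    by_cases hc : c ∈ H.verts
    · refine ⟨_, hc, .nil, .cons h p', by simp, by simp, by simp, by simp, ?_⟩
      intro z hz _
      simpa using hz
    · obtain ⟨y, hy, pre, suf, he1, he2, hl, hs, hlast⟩ := ih hb
      refine ⟨y, hy, .cons h pre, suf, ?_, ?_, ?_, ?_, ?_⟩
      · rw [Walk.edges_cons, Walk.edges_cons]
        exact List.cons_subset_cons _ he1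
      · rw [Walk.edges_cons]
        exact List.Subset.trans he2 (List.subset_cons_self _ _)
      · rw [Walk.length_cons]
        exact hl.trans (Nat.le_succ _)
      · rw [Walk.support_cons, Walk.support_cons]
        exact List.cons_subset_cons _ hs
      · intro z hz hzH
        rw [Walk.support_cons, List.mem_cons] at hz
        rcases hz with rfl | hz
        · exact absurd hzH hc
        · exact hlast z hz hzH

def myGamma (H : G.Subgraph) (D : Set (Sym2 V)) : SimpleGraph ↥H.verts where
  Adj u v := H.Adj u.1 v.1 ∧ s(u.1, v.1) ∉ D
  symm := by
    constructor
    rintro u v ⟨h1, h2⟩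
    exact ⟨h1.symm, by rwa [Sym2.eq_swap]⟩
  loopless := ⟨fun u h => G.loopless.irrefl u.1 (H.adj_sub h.1)⟩

lemma myR [DecidableEq V] {H : G.Subgraph} (hmax : Maximal (IsBiconnected G) H)
    (D : Set (Sym2 V)) :
    ∀ n : ℕ, ∀ {a b : V} (p : G.Walk a b), p.length ≤ n → ∀ (ha : a ∈ H.verts)
    (hb : b ∈ H.verts), (∀ e ∈ p.edges, e ∉ D) →
    (myGamma H D).Reachable ⟨a, ha⟩ ⟨b, hb⟩ := by
  intro n
  induction n with
  | zero =>
    intro a b p hlen ha hb hD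
    cases p with
    | nil => exact Reachable.refl _
    | cons h p' => simp at hlen
  | succ m ihm =>
    intro a b p hlen ha hb hD
    cases p with
    | nil => exact Reachable.refl _
    | @cons a c b h p' =>
      rw [Walk.length_cons, Nat.succ_le_succ_iff] at hlen
      by_cases hc : c ∈ H.verts
      · have hadj : (myGamma H D).Adj ⟨a, ha⟩ ⟨c, hc⟩ :=
          (⟨myInduced hmax ha hc h, hD _ (by simp)⟩ : H.Adj a c ∧ s(a, c) ∉ D)
        exact hadj.reachable.trans (ihm p' hlen hc hb (fun e he => hD e (by simp [he])))
      · obtain ⟨y, hy, pre, suf, he1, he2, hl, hs, hlast⟩ := myFV (H := H) p' hb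
        by_cases hya : y = a
        · subst hya
          exact ihm suf (hl.trans hlen) hy hb (fun e he => hD e (by simp [he2 he]))
        · have hsup : ∀ z ∈ (Walk.cons h pre).support, z = a ∨ z = y ∨ z ∉ H.verts := by
            intro z hz
            rw [Walk.support_cons, List.mem_cons] at hz
            rcases hz with rfl | hz
            · exact Or.inl rfl
            · by_cases hzH : z ∈ H.verts
              · exact Or.inr (Or.inl (hlast z hz hzH))
              · exact Or.inr (Or.inr hzH)
          have hedge := myEar hmax ha hy (fun hh => hya hh.symm) (Walk.cons h pre) hsup
          rw [Walk.edges_cons, List.mem_cons] at hedge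
          rcases hedge with heq | hmem
          · have hyc : y = c := by
              rcases Sym2.eq_iff.1 heq with ⟨_, h2⟩ | ⟨h1, h2⟩
              · exact h2
              · exact absurd h2 hya
            exact absurd (hyc ▸ hy) hc
          · have hGadj : G.Adj a y := p'.adj_of_mem_edges (he1 hmem)
            have hnotD : s(a, y) ∉ D := hD _ (by
              rw [Walk.edges_cons]
              exact List.mem_cons_of_mem _ (he1 hmem))
            have hadj : (myGamma H D).Adj ⟨a, ha⟩ ⟨y, hy⟩ :=
              (⟨myInduced hmax ha hy hGadj, hnotD⟩ : H.Adj a y ∧ s(a, y) ∉ D)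
            exact hadj.reachable.trans
              (ihm suf (hl.trans hlen) hy hb (fun e he => hD e (by simp [he2 he])))



lemma myRD3 {X : Type*} {Γ : SimpleGraph X} {a b x y : X} (p : Γ.Walk x y) :
    (Γ.deleteEdges {s(a, b)}).Reachable x y ∨ (Γ.deleteEdges {s(a, b)}).Reachable x a ∨
      (Γ.deleteEdges {s(a, b)}).Reachable x b := by
  induction p with
  | nil => exact Or.inl (Reachable.refl _)
  | @cons x c y h p ih =>
    by_cases he : s(x, c) ∈ ({s(a, b)} : Set (Sym2 X))
    · rw [Set.mem_singleton_iff] at he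
      rcases Sym2.eq_iff.1 he with ⟨rfl, rfl⟩ | ⟨rfl, rfl⟩
      · exact Or.inr (Or.inl (Reachable.refl _))
      · exact Or.inr (Or.inr (Reachable.refl _))
    · have hadj : (Γ.deleteEdges {s(a, b)}).Adj x c := by
        rw [deleteEdges_adj]; exact ⟨h, he⟩
      rcases ih with h1 | h1 | h1
      · exact Or.inl (hadj.reachable.trans h1)
      · exact Or.inr (Or.inl (hadj.reachable.trans h1))
      · exact Or.inr (Or.inr (hadj.reachable.trans h1))

lemma myDC {X : Type*} [Finite X] (Γ : SimpleGraph X) (a b : X) :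
    Nat.card (Γ.deleteEdges {s(a, b)}).ConnectedComponent ≤
      Nat.card Γ.ConnectedComponent + 1 := by
  classical
  set Γ' := Γ.deleteEdges {s(a, b)} with hΓ'
  have hle : Γ' ≤ Γ := deleteEdges_le _
  set f : Γ'.ConnectedComponent → Γ.ConnectedComponent ⊕ Unit := fun c =>
    if c = Γ'.connectedComponentMk b then Sum.inr ()
    else Sum.inl (c.map (Hom.ofLE hle)) with hf
  have hinj : Function.Injective f := by
    intro c1 c2 hfc
    by_cases h1 : c1 = Γ'.connectedComponentMk b <;>
      by_cases h2 : c2 = Γ'.connectedComponentMk b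
    · rw [h1, h2]
    · simp only [hf, if_pos h1, if_neg h2] at hfc; exact absurd hfc (by simp)
    · simp only [hf, if_neg h1, if_pos h2] at hfc; exact absurd hfc (by simp)
    · simp only [hf, if_neg h1, if_neg h2, Sum.inl.injEq] at hfc
      obtain ⟨u, rfl⟩ := c1.exists_rep
      obtain ⟨v, rfl⟩ := c2.exists_rep
      rw [show (Quot.mk Γ'.Reachable u : Γ'.ConnectedComponent) = Γ'.connectedComponentMk u
        from rfl] at hfc h1 ⊢
      rw [show (Quot.mk Γ'.Reachable v : Γ'.ConnectedComponent) = Γ'.connectedComponentMk v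
        from rfl] at hfc h2 ⊢
      rw [ConnectedComponent.map_mk, ConnectedComponent.map_mk] at hfc
      have hr : Γ.Reachable u v := ConnectedComponent.exact hfc
      obtain ⟨puv⟩ := hr
      rcases myRD3 (a := a) (b := b) puv with hu | hu | hu
      · exact ConnectedComponent.sound hu
      · rcases myRD3 (a := a) (b := b) puv.reverse with hv | hv | hv
        · exact (ConnectedComponent.sound hv).symm
        · exact ConnectedComponent.sound (hu.trans hv.symm)
        · exact absurd (ConnectedComponent.sound hv) h2
      · exact absurd (ConnectedComponent.sound hu) h1
  calc Nat.card Γ'.ConnectedComponent ≤ Nat.card (Γ.ConnectedComponent ⊕ Unit) :=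
        Nat.card_le_card_of_injective f hinj
    _ = Nat.card Γ.ConnectedComponent + 1 := by
        rw [Nat.card_sum]; simp

lemma myCL {X : Type*} [Fintype X] :
    ∀ (n : ℕ) (Γ : SimpleGraph X), Γ.edgeSet.ncard ≤ n →
    Fintype.card X ≤ Γ.edgeSet.ncard + Nat.card Γ.ConnectedComponent := by
  intro n
  induction n with
  | zero =>
    intro Γ hn
    have h0 : Γ.edgeSet.ncard = 0 := Nat.le_zero.1 hn
    have hempty : Γ.edgeSet = ∅ := by
      rwa [Set.ncard_eq_zero (Set.toFinite _)] at h0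
    have hbot : Γ = ⊥ := edgeSet_eq_empty.1 hempty
    subst hbot
    have hbij : Function.Bijective ((⊥ : SimpleGraph X).connectedComponentMk) := by
      constructor
      · intro u v huv
        exact reachable_bot.1 (ConnectedComponent.exact huv)
      · exact fun c => c.exists_rep
    rw [h0]
    rw [← Nat.card_eq_of_bijective _ hbij, Nat.card_eq_fintype_card]
    simp
  | succ m ih =>
    intro Γ hn
    by_cases hm : Γ.edgeSet.ncard ≤ m
    · exact ih Γ hm
    · have hpos : 0 < Γ.edgeSet.ncard := by omega
      have hne : Γ.edgeSet.Nonempty := by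
        rw [Set.nonempty_iff_ne_empty]
        intro hh
        rw [hh] at hpos; simp at hpos
      obtain ⟨e, he⟩ := hne
      induction e with
      | _ a b =>
        have hΓ' : (Γ.deleteEdges {s(a, b)}).edgeSet = Γ.edgeSet \ {s(a, b)} :=
          edgeSet_deleteEdges _
        have hcard : (Γ.deleteEdges {s(a, b)}).edgeSet.ncard + 1 = Γ.edgeSet.ncard := by
          rw [hΓ', Set.ncard_diff_singleton_add_one he (Set.toFinite _)]
        have hih := ih (Γ.deleteEdges {s(a, b)}) (by omega)
        have hdc := myDC Γ a b
        omega

lemma mySingle {K : G.Subgraph} {z : V} (hz : K.verts = {z}) : K.coe.Connected := by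
  rw [connected_iff]
  refine ⟨?_, ⟨⟨z, by rw [hz]; rfl⟩⟩⟩
  intro a b
  have ha : a.1 = z := Set.mem_singleton_iff.1 (hz.subset a.2)
  have hb : b.1 = z := Set.mem_singleton_iff.1 (hz.subset b.2)
  have hab : a = b := Subtype.ext (ha.trans hb.symm)
  rw [hab]

lemma myBase {u v : V} (huv : G.Adj u v) :
    IsBiconnected G (Walk.cons huv Walk.nil).toSubgraph := by
  have hverts : (Walk.cons huv Walk.nil).toSubgraph.verts = {u, v} := by
    rw [Walk.verts_toSubgraph]; ext z; simp
  constructor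
  · exact Walk.toSubgraph_connected _
  · intro w hw
    rw [hverts] at hw
    rcases hw with rfl | rfl
    · apply mySingle (z := v)
      rw [Subgraph.deleteVerts_verts, hverts]
      ext z
      simp only [Set.mem_diff, Set.mem_insert_iff, Set.mem_singleton_iff]
      constructor
      · rintro ⟨rfl | rfl, hz⟩
        · exact absurd rfl hz
        · rfl
      · rintro rfl
        exact ⟨Or.inr rfl, fun h => huv.ne h.symm⟩
    · apply mySingle (z := u)
      rw [Subgraph.deleteVerts_verts, hverts]
      ext z
      simp only [Set.mem_diff, Set.mem_insert_iff, Set.mem_singleton_iff]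
      constructor
      · rintro ⟨rfl | rfl, hz⟩
        · rfl
        · exact absurd rfl hz
      · rintro rfl
        exact ⟨Or.inl rfl, huv.ne⟩

lemma myFiniteSubgraph [Finite V] (G : SimpleGraph V) : Finite G.Subgraph := by
  have hinj : Function.Injective (fun H : G.Subgraph => (H.verts, H.Adj)) := by
    intro a b h
    rw [Prod.mk.injEq] at h
    exact Subgraph.ext h.1 h.2
  exact Finite.of_injective _ hinj

lemma myExistsMax [Finite V] {H₀ : G.Subgraph} (h₀ : IsBiconnected G H₀) :
    ∃ H, H₀ ≤ H ∧ Maximal (IsBiconnected G) H := by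
  haveI := myFiniteSubgraph G
  obtain ⟨H, hH, hmaxw⟩ := Set.Finite.exists_maximalFor id {K | IsBiconnected G K ∧ H₀ ≤ K}
    (Set.toFinite _) ⟨H₀, h₀, le_rfl⟩
  refine ⟨H, hH.2, hH.1, fun K hK hHK => ?_⟩
  have heq : K ≤ H := hmaxw ⟨hK, hH.2.trans hHK⟩ hHK
  exact heq.ge
end AT2Aux
open SimpleGraph in

theorem almostTree2_three_components {V : Type*} [Fintype V] (G : SimpleGraph V)
    (hG : IsAlmostTree2 G) (S : Set V) (hS : 4 ≤ (cutSet G S).ncard) :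
    3 ≤ Nat.card (G.deleteEdges (cutSet G S)).ConnectedComponent := by
  classical
  by_contra hlt
  push_neg at hlt
  set D := cutSet G S with hDdef
  set G' := G.deleteEdges D with hG'def
  have hcross : ∀ {a c : V}, G.Adj a c → a ∈ S → c ∉ S → s(a, c) ∈ D := by
    intro a c h ha hc
    exact ⟨G.mem_edgeSet.2 h, a, c, rfl, ha, hc⟩
  have hcross' : ∀ {a c : V}, G'.Adj a c → (a ∈ S ↔ c ∈ S) := by
    intro a c h
    rw [hG'def, deleteEdges_adj] at h
    constructor
    · intro ha; by_contra hc; exact h.2 (hcross h.1 ha hc)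
    · intro hc; by_contra ha
      apply h.2
      have := hcross h.1.symm hc ha
      rwa [Sym2.eq_swap] at this
  have hwalkS : ∀ {a c : V} (p : G'.Walk a c), a ∈ S → ∀ z ∈ p.support, z ∈ S := by
    intro a c p
    induction p with
    | nil =>
      intro ha z hz
      rw [Walk.support_nil, List.mem_singleton] at hz
      exact hz ▸ ha
    | cons h p ih =>
      intro ha z hz
      rw [Walk.support_cons, List.mem_cons] at hz
      rcases hz with rfl | hz
      · exact ha
      · exact ih ((hcross' h).1 ha) z hz
  have hwalkSc : ∀ {a c : V} (p : G'.Walk a c), a ∉ S → ∀ z ∈ p.support, z ∉ S := by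
    intro a c p
    induction p with
    | nil =>
      intro ha z hz
      rw [Walk.support_nil, List.mem_singleton] at hz
      exact hz ▸ ha
    | cons h p ih =>
      intro ha z hz
      rw [Walk.support_cons, List.mem_cons] at hz
      rcases hz with rfl | hz
      · exact ha
      · exact ih (fun hcS => ha ((hcross' h).2 hcS)) z hz
  have hreachS : ∀ {a c : V}, G'.Reachable a c → a ∈ S → c ∈ S := by
    rintro a c ⟨p⟩ ha
    exact hwalkS p ha c p.end_mem_support
  have hDfin : D.Finite := Set.toFinite _
  have hDne : D.Nonempty := by
    rcases Set.eq_empty_or_nonempty D with h | h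
    · rw [h, Set.ncard_empty] at hS; omega
    · exact h
  obtain ⟨e₀, he₀⟩ := hDne
  obtain ⟨heE, u, v, heq, huS, hvS⟩ := (he₀ : e₀ ∈ G.edgeSet ∧ _)
  subst heq
  have huv : G.Adj u v := G.mem_edgeSet.1 heE
  have hmk : ∀ {a c : V}, a ∈ S → c ∉ S → ¬G'.Reachable a c :=
    fun ha hc hr => hc (hreachS hr ha)
  have hcuv : G'.connectedComponentMk u ≠ G'.connectedComponentMk v :=
    fun h => hmk huS hvS (ConnectedComponent.exact h)
  haveI : Fintype G'.ConnectedComponent := Fintype.ofFinite _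
  have hcomp2 : ∀ w : V, G'.connectedComponentMk w = G'.connectedComponentMk u ∨
      G'.connectedComponentMk w = G'.connectedComponentMk v := by
    intro w
    by_contra hcon
    push_neg at hcon
    have h3 : ({G'.connectedComponentMk w, G'.connectedComponentMk u,
        G'.connectedComponentMk v} : Finset G'.ConnectedComponent).card = 3 := by
      rw [Finset.card_insert_of_notMem (by simp [hcon.1, hcon.2]),
        Finset.card_insert_of_notMem (by simp [hcuv]), Finset.card_singleton]
    have hle := Finset.card_le_univ ({G'.connectedComponentMk w, G'.connectedComponentMk u,
        G'.connectedComponentMk v} : Finset G'.ConnectedComponent)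
    rw [h3] at hle
    rw [Nat.card_eq_fintype_card] at hlt
    omega
  have hSu : ∀ w ∈ S, G'.Reachable w u := by
    intro w hw
    rcases hcomp2 w with h | h
    · exact ConnectedComponent.exact h
    · exact absurd (ConnectedComponent.exact h) (hmk hw hvS)
  have hSv : ∀ w, w ∉ S → G'.Reachable w v := by
    intro w hw
    rcases hcomp2 w with h | h
    · exact absurd (ConnectedComponent.exact h).symm (hmk huS hw)
    · exact ConnectedComponent.exact h
  obtain ⟨H, hH0, hmax⟩ := myExistsMax (myBase huv)
  have huH : u ∈ H.verts := hH0.1 (Walk.cons huv Walk.nil).start_mem_verts_toSubgraph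
  have hvH : v ∈ H.verts := hH0.1 (Walk.cons huv Walk.nil).end_mem_verts_toSubgraph
  have hGedges : ∀ {a c : V} (p : G'.Walk a c), ∀ e ∈ p.edges, e ∈ G.edgeSet := by
    intro a c p e he
    have h1 := p.edges_subset_edgeSet he
    rw [hG'def, edgeSet_deleteEdges] at h1
    exact h1.1
  have hGedgesD : ∀ {a c : V} (p : G'.Walk a c), ∀ e ∈ p.edges, e ∉ D := by
    intro a c p e he
    have h1 := p.edges_subset_edgeSet he
    rw [hG'def, edgeSet_deleteEdges] at h1
    exact h1.2
  have hFVS : ∀ a ∈ S, ∃ y, ∃ _hy : y ∈ H.verts, ∃ pre : G.Walk a y,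
      (∀ e ∈ pre.edges, e ∉ D) ∧ (∀ z ∈ pre.support, z ∈ S) ∧
      (∀ z ∈ pre.support, z ∈ H.verts → z = y) := by
    intro a ha
    obtain ⟨p⟩ := hSu a ha
    set q := p.transfer G (hGedges p) with hq
    obtain ⟨y, hy, pre, suf, he1, _, _, hsup, hlast⟩ := myFV (H := H) q huH
    refine ⟨y, hy, pre, ?_, ?_, hlast⟩
    · intro e he
      have : e ∈ q.edges := he1 he
      rw [hq, p.edges_transfer] at this
      exact hGedgesD p e this
    · intro z hz
      have : z ∈ q.support := hsup hz
      rw [hq, p.support_transfer] at this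
      exact hwalkS p ha z this
  have hFVSc : ∀ a, a ∉ S → ∃ y, ∃ _hy : y ∈ H.verts, ∃ pre : G.Walk a y,
      (∀ e ∈ pre.edges, e ∉ D) ∧ (∀ z ∈ pre.support, z ∉ S) ∧
      (∀ z ∈ pre.support, z ∈ H.verts → z = y) := by
    intro a ha
    obtain ⟨p⟩ := hSv a ha
    set q := p.transfer G (hGedges p) with hq
    obtain ⟨y, hy, pre, suf, he1, _, _, hsup, hlast⟩ := myFV (H := H) q hvH
    refine ⟨y, hy, pre, ?_, ?_, hlast⟩
    · intro e he
      have : e ∈ q.edges := he1 he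
      rw [hq, p.edges_transfer] at this
      exact hGedgesD p e this
    · intro z hz
      have : z ∈ q.support := hsup hz
      rw [hq, p.support_transfer] at this
      exact hwalkSc p ha z this
  have hendp : ∀ {a c : V}, G.Adj a c → a ∈ S → c ∉ S → a ∈ H.verts ∧ c ∈ H.verts := by
    intro a c hadj ha hc
    obtain ⟨y₁, hy₁, pre₁, hpe₁, hps₁, hlast₁⟩ := hFVS a ha
    obtain ⟨y₂, hy₂, pre₂, hpe₂, hps₂, hlast₂⟩ := hFVSc c hc
    have hy₁S : y₁ ∈ S := hps₁ y₁ pre₁.end_mem_support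
    have hy₂S : y₂ ∉ S := hps₂ y₂ pre₂.end_mem_support
    have hne : y₁ ≠ y₂ := fun h => hy₂S (h ▸ hy₁S)
    set p : G.Walk y₁ y₂ := pre₁.reverse.append (Walk.cons hadj pre₂) with hpdef
    have hsupp : ∀ z ∈ p.support, z = y₁ ∨ z = y₂ ∨ z ∉ H.verts := by
      intro z hz
      rw [hpdef, Walk.support_append, List.mem_append] at hz
      rcases hz with hz | hz
      · rw [Walk.support_reverse, List.mem_reverse] at hz
        by_cases hzH : z ∈ H.verts
        · exact Or.inl (hlast₁ z hz hzH)
        · exact Or.inr (Or.inr hzH)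
      · rw [Walk.support_cons, List.tail_cons] at hz
        by_cases hzH : z ∈ H.verts
        · exact Or.inr (Or.inl (hlast₂ z hz hzH))
        · exact Or.inr (Or.inr hzH)
    have hedge := myEar hmax hy₁ hy₂ hne p hsupp
    rw [hpdef, Walk.edges_append, List.mem_append, Walk.edges_reverse, List.mem_reverse,
      Walk.edges_cons, List.mem_cons] at hedge
    rcases hedge with h1 | h1 | h1
    · exact absurd (hps₁ y₂ (pre₁.snd_mem_support_of_mem_edges h1)) hy₂S
    · rcases Sym2.eq_iff.1 h1 with ⟨h2, h3⟩ | ⟨h2, h3⟩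
      · exact ⟨h2 ▸ hy₁, h3 ▸ hy₂⟩
      · exact absurd (h2 ▸ hy₁S) hc
    · exact absurd hy₁S (hps₂ y₁ (pre₂.fst_mem_support_of_mem_edges h1))
  have hDH : D ⊆ H.edgeSet := by
    intro e he
    obtain ⟨heE', a, c, rfl, ha, hc⟩ := (he : e ∈ G.edgeSet ∧ _)
    have hadj := G.mem_edgeSet.1 heE'
    obtain ⟨haH, hcH⟩ := hendp hadj ha hc
    exact Subgraph.mem_edgeSet.2 (myInduced hmax haH hcH hadj)
  set Γ := myGamma H D with hΓdef
  have hreachΓu : ∀ (w) (hw : w ∈ H.verts), w ∈ S → Γ.Reachable ⟨w, hw⟩ ⟨u, huH⟩ := by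
    intro w hw hwS
    obtain ⟨p⟩ := hSu w hwS
    set q := p.transfer G (hGedges p) with hq
    apply myR hmax D q.length q le_rfl hw huH
    intro e he
    rw [hq, p.edges_transfer] at he
    exact hGedgesD p e he
  have hreachΓv : ∀ (w) (hw : w ∈ H.verts), w ∉ S → Γ.Reachable ⟨w, hw⟩ ⟨v, hvH⟩ := by
    intro w hw hwS
    obtain ⟨p⟩ := hSv w hwS
    set q := p.transfer G (hGedges p) with hq
    apply myR hmax D q.length q le_rfl hw hvH
    intro e he
    rw [hq, p.edges_transfer] at he
    exact hGedgesD p e he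
  haveI : Fintype ↥H.verts := Fintype.ofFinite _
  have hcompΓ : ∀ c : Γ.ConnectedComponent, c = Γ.connectedComponentMk ⟨u, huH⟩ ∨
      c = Γ.connectedComponentMk ⟨v, hvH⟩ := by
    intro c
    obtain ⟨w, rfl⟩ := c.exists_rep
    by_cases hw : w.1 ∈ S
    · exact Or.inl (ConnectedComponent.sound (hreachΓu w.1 w.2 hw))
    · exact Or.inr (ConnectedComponent.sound (hreachΓv w.1 w.2 hw))
  have hcardΓ : Nat.card Γ.ConnectedComponent ≤ 2 := by
    by_cases hUV : Γ.connectedComponentMk ⟨u, huH⟩ = Γ.connectedComponentMk ⟨v, hvH⟩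
    · have hall : ∀ c : Γ.ConnectedComponent, c = Γ.connectedComponentMk ⟨u, huH⟩ := by
        intro c
        rcases hcompΓ c with h | h
        · exact h
        · exact h.trans hUV.symm
      have hinj : Function.Injective (fun _ : Γ.ConnectedComponent => ()) := by
        intro c1 c2 _
        exact (hall c1).trans (hall c2).symm
      have := Nat.card_le_card_of_injective _ hinj
      simp only [Nat.card_unique] at this
      omega
    · have hinj : Function.Injective (fun c : Γ.ConnectedComponent =>
          (decide (c = Γ.connectedComponentMk ⟨u, huH⟩) : Bool)) := by
        intro c1 c2 h
        simp only [decide_eq_decide] at h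
        rcases hcompΓ c1 with h1 | h1 <;> rcases hcompΓ c2 with h2 | h2
        · exact h1.trans h2.symm
        · exact absurd ((h.1 h1).symm.trans h2) hUV
        · exact absurd ((h.2 h2).symm.trans h1) hUV
        · exact h1.trans h2.symm
      have := Nat.card_le_card_of_injective _ hinj
      simpa using this
  have hcount := myCL Γ.edgeSet.ncard Γ le_rfl
  have hXcard : Fintype.card ↥H.verts = H.verts.ncard := by
    rw [← Nat.card_eq_fintype_card, Nat.card_coe_set_eq]
  have hEinj : Γ.edgeSet.ncard ≤ (H.edgeSet \ D).ncard := by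
    apply Set.ncard_le_ncard_of_injOn (Sym2.map Subtype.val)
    · intro e he
      induction e with
      | _ a b =>
        rw [mem_edgeSet] at he
        obtain ⟨hH', hD'⟩ := (he : H.Adj a.1 b.1 ∧ s(a.1, b.1) ∉ D)
        rw [Sym2.map_pair_eq]
        exact ⟨Subgraph.mem_edgeSet.2 hH', hD'⟩
    · exact (Sym2.map.injective Subtype.val_injective).injOn
  have hsplit : (H.edgeSet \ D).ncard + D.ncard = H.edgeSet.ncard :=
    Set.ncard_diff_add_ncard_of_subset hDH (Set.toFinite _)
  have hHbound := hG.2 H hmax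
  rw [hXcard] at hcount
  omega
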